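/- arXiv:1408.2081 — 2 statements merged into one kernel-verified Lean document; each statement's English description precedes it below -/
import Mathlib

section
/- An infinite structure C consisting of a strict (irreflexive) total order E is not ptp-conservative: for every coloring C̄ of C and every n, there exists an element e of C such that M_n(C̄) satisfies E(q_n(e), q_n(e)), so the positive 1-type of e (over the order signature) is not preserved by q_n. -/
namespace BDDFC

/-- A (binary) relational signature: binary relation symbols, unary relation
symbols (used also for colors), and constants. -/
structure Sig where
  Rel : Type
  Un : Type
  Const : Type

/-- A relational structure over a signature. -/
structure Str (σ : Sig) where
  Dom : Type
  rel : σ.Rel → Dom → Dom → Prop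
  un : σ.Un → Dom → Prop
  const : σ.Const → Dom

/-- Terms of a conjunctive query `Ψ(x̄, y)` with `k` existential variables:
an existential variable, the distinguished free variable `y`, or a constant. -/
inductive Tm (σ : Sig) (k : ℕ) where
  | var : Fin k → Tm σ k
  | y : Tm σ k
  | const : σ.Const → Tm σ k

/-- Atoms of conjunctive queries: binary relation atoms, unary atoms,
and equalities (in particular equalities with constants). -/
inductive Atom (σ : Sig) (k : ℕ) where
  | rel : σ.Rel → Tm σ k → Tm σ k → Atom σ k
  | un : σ.Un → Tm σ k → Atom σ k
  | eq : Tm σ k → Tm σ k → Atom σ k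

/-- A conjunctive query `Ψ(x̄, y)` with `|x̄| = k`, as a finite conjunction of atoms. -/
abbrev CQ (σ : Sig) (k : ℕ) := List (Atom σ k)

variable {σ : Sig}

def tmVal (A : Str σ) {k : ℕ} (v : Fin k → A.Dom) (e : A.Dom) : Tm σ k → A.Dom
  | .var i => v i
  | .y => e
  | .const c => A.const c

def satAtom (A : Str σ) {k : ℕ} (v : Fin k → A.Dom) (e : A.Dom) : Atom σ k → Prop
  | .rel R s t => A.rel R (tmVal A v e s) (tmVal A v e t)
  | .un U s => A.un U (tmVal A v e s)
  | .eq s t => tmVal A v e s = tmVal A v e t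

/-- `A ⊨ Ψ(v(x̄), e)`. -/
def sat (A : Str σ) {k : ℕ} (v : Fin k → A.Dom) (e : A.Dom) (q : CQ σ k) : Prop :=
  ∀ a ∈ q, satAtom A v e a

/-- `Ψ(x̄,y) ∈ ptp_n(A, e, σ)` : a query with `|x̄| < n` satisfied at `e`. -/
def inPtp (A : Str σ) (n : ℕ) (e : A.Dom) {k : ℕ} (q : CQ σ k) : Prop :=
  k < n ∧ ∃ v, sat A v e q

/-- The positive `n`-type of `e` in `A`, as a set of conjunctive queries. -/
def ptypeSet (A : Str σ) (n : ℕ) (e : A.Dom) : Set (Σ k : ℕ, CQ σ k) :=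
  {p | p.1 < n ∧ ∃ v, sat A v e p.2}

/-- `d ≡_n e` : equality of positive `n`-types. -/
def equivPtp (A : Str σ) (n : ℕ) (d e : A.Dom) : Prop :=
  ∀ k, k < n → ∀ q : CQ σ k, (∃ v, sat A v d q) ↔ (∃ v, sat A v e q)

def ptpSetoid (A : Str σ) (n : ℕ) : Setoid A.Dom where
  r := equivPtp A n
  iseqv := ⟨fun _ _ _ _ => Iff.rfl, fun h k hk q => (h k hk q).symm,
            fun h h' k hk q => (h k hk q).trans (h' k hk q)⟩

/-- The quotient structure `M_n(A)`, with relations the projections of the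
relations of `A` (the minimal ones making the quotient map a homomorphism). -/
def Mq (A : Str σ) (n : ℕ) : Str σ where
  Dom := Quotient (ptpSetoid A n)
  rel R x y := ∃ a b, Quotient.mk (ptpSetoid A n) a = x ∧
    Quotient.mk (ptpSetoid A n) b = y ∧ A.rel R a b
  un U x := ∃ a, Quotient.mk (ptpSetoid A n) a = x ∧ A.un U a
  const c := Quotient.mk (ptpSetoid A n) (A.const c)

/-- The quotient map `q_n : A → M_n(A)`. -/
def qmap (A : Str σ) (n : ℕ) (a : A.Dom) : (Mq A n).Dom :=
  Quotient.mk (ptpSetoid A n) a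

def IsHom (A B : Str σ) (f : A.Dom → B.Dom) : Prop :=
  (∀ R a b, A.rel R a b → B.rel R (f a) (f b)) ∧
  (∀ U a, A.un U a → B.un U (f a)) ∧
  (∀ c, f (A.const c) = B.const c)

/-- An element is non-constant if it is not the interpretation of a constant. -/
def NonConst (A : Str σ) (a : A.Dom) : Prop := ∀ c, A.const c ≠ a

/-- The signature extended by a set `K` of colors (fresh unary predicates). -/
def colorSig (σ : Sig) (K : Type) : Sig := ⟨σ.Rel, σ.Un ⊕ K, σ.Const⟩

/-- The coloring of `C` determined by a color assignment `col`; each element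
satisfies exactly one color. -/
def colored (C : Str σ) {K : Type} (col : C.Dom → K) : Str (colorSig σ K) where
  Dom := C.Dom
  rel := C.rel
  un := fun u a => match u with
    | Sum.inl u' => C.un u' a
    | Sum.inr kk => col a = kk
  const := C.const

/-- The reduct of a colored structure back to the base signature. -/
def reduct {K : Type} (A : Str (colorSig σ K)) : Str σ where
  Dom := A.Dom
  rel := A.rel
  un := fun u a => A.un (Sum.inl u) a
  const := A.const

/-- The coloring `col` of `C` is `n`-conservative up to size `m`: positive
`m`-types over the base signature are preserved by the quotient map `q_n`. -/
def conservative (C : Str σ) {K : Type} (col : C.Dom → K) (n m : ℕ) : Prop :=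
  ∀ e : C.Dom, ∀ k, k < m → ∀ q : CQ σ k,
    (∃ v, sat C v e q) ↔
    (∃ v, sat (reduct (Mq (colored C col) n)) v (qmap (colored C col) n e) q)

/-- One step of the edge relation of a binary structure. -/
def edge (A : Str σ) (a b : A.Dom) : Prop := ∃ R, A.rel R a b

/-- Directed paths of a given length. -/
def chain (A : Str σ) : ℕ → A.Dom → A.Dom → Prop
  | 0, a, b => a = b
  | ℓ + 1, a, b => ∃ c, edge A a c ∧ chain A ℓ c b

end BDDFC

open BDDFC

/-- The signature of a single binary relation (the order). -/
def orderSig : Sig := ⟨Unit, Empty, Empty⟩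

namespace BDDFC

/-- `Tm` is finite when the pieces are. -/
instance tmFinite {σ : Sig} [Finite σ.Const] (k : ℕ) : Finite (Tm σ k) := by
  have : ∀ t : Tm σ k, ∃ x : (Fin k) ⊕ Unit ⊕ σ.Const,
      t = (match x with
        | Sum.inl i => Tm.var i
        | Sum.inr (Sum.inl _) => Tm.y
        | Sum.inr (Sum.inr c) => Tm.const c) := by
    intro t
    cases t with
    | var i => exact ⟨Sum.inl i, rfl⟩
    | y => exact ⟨Sum.inr (Sum.inl ()), rfl⟩
    | const c => exact ⟨Sum.inr (Sum.inr c), rfl⟩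
  exact Finite.of_surjective
    (fun x : (Fin k) ⊕ Unit ⊕ σ.Const =>
      match x with
      | Sum.inl i => Tm.var i
      | Sum.inr (Sum.inl _) => Tm.y
      | Sum.inr (Sum.inr c) => Tm.const c)
    (fun t => ⟨(this t).choose, ((this t).choose_spec).symm⟩)

instance atomFinite {σ : Sig} [Finite σ.Rel] [Finite σ.Un] [Finite σ.Const]
    (k : ℕ) : Finite (Atom σ k) := by
  have : ∀ a : Atom σ k, ∃ x : (σ.Rel × Tm σ k × Tm σ k) ⊕ (σ.Un × Tm σ k) ⊕
      (Tm σ k × Tm σ k),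
      a = (match x with
        | Sum.inl (R, s, t) => Atom.rel R s t
        | Sum.inr (Sum.inl (U, s)) => Atom.un U s
        | Sum.inr (Sum.inr (s, t)) => Atom.eq s t) := by
    intro a
    cases a with
    | rel R s t => exact ⟨Sum.inl (R, s, t), rfl⟩
    | un U s => exact ⟨Sum.inr (Sum.inl (U, s)), rfl⟩
    | eq s t => exact ⟨Sum.inr (Sum.inr (s, t)), rfl⟩
  exact Finite.of_surjective
    (fun x : (σ.Rel × Tm σ k × Tm σ k) ⊕ (σ.Un × Tm σ k) ⊕ (Tm σ k × Tm σ k) =>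
      match x with
      | Sum.inl (R, s, t) => Atom.rel R s t
      | Sum.inr (Sum.inl (U, s)) => Atom.un U s
      | Sum.inr (Sum.inr (s, t)) => Atom.eq s t)
    (fun a => ⟨(this a).choose, ((this a).choose_spec).symm⟩)

/-- The atom-set profile of an element: which sets of atoms (with `< n`
variables) are satisfiable at it. Since satisfaction of a query depends only
on its set of atoms, equal profiles give equal positive `n`-types. -/
def profile {σ : Sig} (A : Str σ) (n : ℕ) (e : A.Dom) :
    ∀ k : Fin n, Set (Atom σ k.1) → Prop :=
  fun k S => ∃ v : Fin k.1 → A.Dom, ∀ a ∈ S, satAtom A v e a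

theorem equivPtp_of_profile_eq {σ : Sig} (A : Str σ) (n : ℕ) (d e : A.Dom)
    (h : profile A n d = profile A n e) : equivPtp A n d e := by
  intro k hk q
  have := congrFun (congrFun h ⟨k, hk⟩) {a | a ∈ q}
  exact Iff.of_eq this

end BDDFC

/-- an infinite strict (irreflexive) total order is not
ptp-conservative: for every coloring and every `n` some element `e` gets a
self-loop `E(q_n(e), q_n(e))` in the quotient `M_n(C̄)`, so the positive 1-type
of `e` is not preserved by `q_n`. -/
theorem stmt_8 (C : Str orderSig) [Infinite C.Dom]
    (hirr : ∀ a : C.Dom, ¬ C.rel () a a)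
    (htrans : ∀ a b c : C.Dom, C.rel () a b → C.rel () b c → C.rel () a c)
    (htotal : ∀ a b : C.Dom, a ≠ b → C.rel () a b ∨ C.rel () b a)
    (K : Type) [Finite K] (col : C.Dom → K) (n : ℕ) :
    ∃ e : C.Dom,
      (Mq (colored C col) n).rel () (qmap (colored C col) n e)
        (qmap (colored C col) n e) ∧
      ¬ C.rel () e e := by
  classical
  set A := colored C col with hA
  have hRel : Finite (colorSig orderSig K).Rel := by
    show Finite Unit; infer_instance
  have hUn : Finite (colorSig orderSig K).Un := by
    show Finite (Empty ⊕ K); infer_instance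
  have hConst : Finite (colorSig orderSig K).Const := by
    show Finite Empty; infer_instance
  haveI : Infinite A.Dom := inferInstanceAs (Infinite C.Dom)
  obtain ⟨a, b, hne, hfab⟩ :=
    Finite.exists_ne_map_eq_of_infinite (profile A n)
  have hequiv : equivPtp A n a b := equivPtp_of_profile_eq A n a b hfab
  have hmk : Quotient.mk (ptpSetoid A n) a = Quotient.mk (ptpSetoid A n) b :=
    Quotient.sound hequiv
  rcases htotal a b hne with hab | hba
  · exact ⟨a, ⟨a, b, rfl, hmk.symm, hab⟩, hirr a⟩
  · exact ⟨b, ⟨b, a, rfl, hmk, hba⟩, hirr b⟩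
end

section
/- Let C̄ be a natural coloring of a VTDAG C (so that any directed path of length ≤ m joins elements of distinct color hues). Let n ≥ m. Then M_n(C̄) contains no directed cycle R_1(x_1,x_2), R_2(x_2,x_3), …, R_k(x_k,x_1) of length k < m; i.e., no conjunctive query containing such a directed cycle is satisfied in M_n(C̄). -/
namespace BDDFC

variable {σ : Sig}

/-! ### Auxiliary machinery for the proof of statement 13 -/

/-- Lift a term over `j` variables to `j+1` variables, sending `y` to the new
last variable. -/
def liftTm {j : ℕ} : Tm σ j → Tm σ (j + 1)
  | .var i => .var i.castSucc
  | .y => .var (Fin.last j)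
  | .const c => .const c

/-- Lift an atom accordingly. -/
def liftAtom {j : ℕ} : Atom σ j → Atom σ (j + 1)
  | .rel R s t => .rel R (liftTm s) (liftTm t)
  | .un U s => .un U (liftTm s)
  | .eq s t => .eq (liftTm s) (liftTm t)

theorem tmVal_liftTm (A : Str σ) {j : ℕ} (v : Fin (j + 1) → A.Dom) (e : A.Dom)
    (t : Tm σ j) :
    tmVal A v e (liftTm t) = tmVal A (v ∘ Fin.castSucc) (v (Fin.last j)) t := by
  cases t <;> rfl

theorem satAtom_liftAtom (A : Str σ) {j : ℕ} (v : Fin (j + 1) → A.Dom) (e : A.Dom)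
    (at' : Atom σ j) :
    satAtom A v e (liftAtom at') ↔
      satAtom A (v ∘ Fin.castSucc) (v (Fin.last j)) at' := by
  cases at' <;> simp [satAtom, liftAtom, tmVal_liftTm]

/-- The conjunctive query saying: there is a directed path
`x_0 → x_1 → ⋯ → x_i → y` using relations `R 0, …, R i`, where `x_0` has
color `u`. -/
def pathQ (R : ℕ → σ.Rel) (u : σ.Un) : (i : ℕ) → CQ σ (i + 1)
  | 0 => [.un u (.var 0), .rel (R 0) (.var 0) .y]
  | i + 1 => .rel (R (i + 1)) (.var (Fin.last (i + 1))) .y ::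
      (pathQ R u i).map liftAtom

theorem chain_snoc (A : Str σ) : ∀ (ℓ : ℕ) (a b c : A.Dom),
    chain A ℓ a b → edge A b c → chain A (ℓ + 1) a c := by
  intro ℓ
  induction ℓ with
  | zero => intro a b c hab hbc; cases hab; exact ⟨c, hbc, rfl⟩
  | succ ℓ ih =>
    rintro a b c ⟨d, had, hdb⟩ hbc
    exact ⟨d, had, ih d b c hdb hbc⟩

theorem pathQ_chain (R : ℕ → σ.Rel) (u : σ.Un) (A : Str σ) :
    ∀ (i : ℕ) (v : Fin (i + 1) → A.Dom) (e : A.Dom),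
      sat A v e (pathQ R u i) → chain A (i + 1) (v 0) e ∧ A.un u (v 0) := by
  intro i
  induction i with
  | zero =>
    intro v e h
    have h1 := h _ List.mem_cons_self
    have h2 := h _ (List.mem_cons_of_mem _ List.mem_cons_self)
    exact ⟨⟨e, ⟨R 0, h2⟩, rfl⟩, h1⟩
  | succ i ih =>
    intro v e h
    have hhead := h _ List.mem_cons_self
    have htail : sat A (v ∘ Fin.castSucc) (v (Fin.last (i + 1))) (pathQ R u i) := by
      intro a ha
      have := h _ (List.mem_cons_of_mem _ (List.mem_map_of_mem (f := liftAtom) ha))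
      exact (satAtom_liftAtom A v e a).mp this
    obtain ⟨hch, hun⟩ := ih _ _ htail
    have h0 : (v ∘ Fin.castSucc) 0 = v 0 := congrArg v (Fin.ext rfl)
    rw [h0] at hch hun
    refine ⟨chain_snoc A _ _ _ _ hch ⟨R (i + 1), hhead⟩, hun⟩

end BDDFC

open BDDFC

/-- if `C̄` is a natural coloring of a VTDAG (so any directed path
of length between 1 and `m` joins elements of distinct color hues) and `n ≥ m`,
then `M_n(C̄)` contains no directed cycle `R_1(x_1,x_2), …, R_k(x_k,x_1)` of
length `k < m`. -/
theorem stmt_13 {σ : Sig} (C : Str σ) (m n : ℕ) (hmn : m ≤ n)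
    -- C is a VTDAG:
    (hdag : ∀ a : C.Dom, NonConst C a →
      ¬ Relation.TransGen (fun x y => NonConst C x ∧ NonConst C y ∧ edge C x y) a a)
    (huniq : ∀ (R : σ.Rel) (e d d' : C.Dom), NonConst C e → NonConst C d →
      NonConst C d' → C.rel R d e → C.rel R d' e → d = d')
    (hclique : ∀ e d d' : C.Dom, NonConst C e → NonConst C d → NonConst C d' →
      edge C d e → edge C d' e → d = d' ∨ edge C d d' ∨ edge C d' d)
    -- the unary predicates are the colors of a natural coloring, with hues `hue`:
    (H : Type) (hue : σ.Un → H)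
    (hone : ∀ a : C.Dom, ∃! u : σ.Un, C.un u a)
    (hhue : ∀ ℓ, 1 ≤ ℓ → ℓ ≤ m → ∀ a b : C.Dom, chain C ℓ a b →
      ∀ u u' : σ.Un, C.un u a → C.un u' b → hue u ≠ hue u')
    (k : ℕ) (hk0 : 0 < k) (hkm : k < m) :
    ¬ ∃ (f : Fin k → (Mq C n).Dom) (Rs : Fin k → σ.Rel),
        ∀ i : Fin k, (Mq C n).rel (Rs i) (f i) (f ⟨(i.1 + 1) % k, Nat.mod_lt _ hk0⟩) := by
  rintro ⟨f, Rs, hcyc⟩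
  -- choose representatives of the edges of the cycle
  choose a b ha hb hab using hcyc
  -- index everything by natural numbers, through `% k`
  set idx : ℕ → Fin k := fun i => ⟨i % k, Nat.mod_lt _ hk0⟩ with hidx
  set a' : ℕ → C.Dom := fun i => a (idx i) with ha'
  set b' : ℕ → C.Dom := fun i => b (idx i) with hb'
  set R : ℕ → σ.Rel := fun i => Rs (idx i) with hR
  have hrel : ∀ i : ℕ, C.rel (R i) (a' i) (b' i) := fun i => hab (idx i)
  have hequiv : ∀ i : ℕ, equivPtp C n (b' i) (a' (i + 1)) := by
    intro i
    have h1 : Quotient.mk (ptpSetoid C n) (b (idx i)) =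
        f ⟨((idx i).1 + 1) % k, Nat.mod_lt _ hk0⟩ := hb (idx i)
    have h2 : Quotient.mk (ptpSetoid C n) (a (idx (i + 1))) = f (idx (i + 1)) :=
      ha (idx (i + 1))
    have hmod : (⟨((idx i).1 + 1) % k, Nat.mod_lt _ hk0⟩ : Fin k) = idx (i + 1) := by
      simp only [hidx]
      exact Fin.ext (by simp [Nat.add_mod_right, Nat.mod_add_mod])
    rw [hmod] at h1
    exact Quotient.exact (h1.trans h2.symm)
  -- the color of a' 0
  obtain ⟨u, hu, -⟩ := hone (a' 0)
  -- the key invariant: `b' i` satisfies the query `pathQ R u i`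
  have key : ∀ i : ℕ, i < k → ∃ v, sat C v (b' i) (pathQ R u i) := by
    intro i
    induction i with
    | zero =>
      intro _
      refine ⟨fun _ => a' 0, ?_⟩
      intro at' hat'
      simp only [pathQ, List.mem_cons, List.not_mem_nil, or_false] at hat'
      rcases hat' with rfl | rfl
      · exact hu
      · exact hrel 0
    | succ i ih =>
      intro hik
      obtain ⟨v, hv⟩ := ih (lt_trans (Nat.lt_succ_self i) hik)
      -- transfer along b' i ≡_n a' (i+1)
      have hsz : i + 1 < n := lt_of_lt_of_le (lt_trans hik hkm) hmn
      obtain ⟨w, hw⟩ := (hequiv i (i + 1) hsz (pathQ R u i)).mp ⟨v, hv⟩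
      refine ⟨Fin.snoc w (a' (i + 1)), ?_⟩
      intro at' hat'
      rcases List.mem_cons.mp hat' with h | h
      · subst h
        show C.rel (R (i + 1)) _ _
        simp only [satAtom, tmVal, Fin.snoc_last]
        exact hrel (i + 1)
      · obtain ⟨at₀, hat₀, rfl⟩ := List.mem_map.mp h
        rw [satAtom_liftAtom]
        have he1 : (Fin.snoc w (a' (i + 1)) : Fin (i + 2) → C.Dom) ∘ Fin.castSucc = w := by
          funext j; simp
        have he2 : (Fin.snoc w (a' (i + 1)) : Fin (i + 2) → C.Dom) (Fin.last (i + 1)) =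
            a' (i + 1) := Fin.snoc_last _ _
        rw [he1, he2]
        exact hw at₀ hat₀
  -- close the cycle at a' 0
  obtain ⟨v, hv⟩ := key (k - 1) (Nat.sub_lt hk0 one_pos)
  have hk1 : k - 1 + 1 = k := Nat.succ_pred_eq_of_pos hk0
  have hequiv0 : equivPtp C n (b' (k - 1)) (a' 0) := by
    have := hequiv (k - 1)
    rw [hk1] at this
    have hmod : a' k = a' 0 := by
      simp only [ha', hidx]
      congr 1
      exact Fin.ext (by simp [Nat.mod_self])
    rwa [hmod] at this
  have hsz : k - 1 < n := lt_of_lt_of_le (lt_trans (Nat.sub_lt hk0 one_pos) hkm) hmn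
  obtain ⟨w, hw⟩ := (hequiv0 (k - 1 + 1) (by rw [hk1]; exact lt_of_lt_of_le hkm hmn)
    (pathQ R u (k - 1))).mp ⟨v, hv⟩
  obtain ⟨hch, hun⟩ := pathQ_chain R u C (k - 1) w (a' 0) hw
  exact hhue (k - 1 + 1) (Nat.succ_le_succ (Nat.zero_le _))
    (by rw [hk1]; exact le_of_lt hkm) (w 0) (a' 0) hch u u hun hu rfl
end
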